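/- Let w : ℝ → ℝ be a measurable function with w(x) ≥ 0 for all x, such that ∫ |x|^k w(x) dx < ∞ for every integer k ≥ 0 and the set {x : w(x) > 0} has positive Lebesgue measure. Let p be a monic real polynomial of degree n ≥ 1 with ∫ p(x)·q(x)·w(x) dx = 0 for every polynomial q of degree < n, and let x_1 < ⋯ < x_n be its n distinct real roots. Then there exist strictly positive real numbers w_1, …, w_n such that ∫ f(x)·w(x) dx = Σ_{k=1}^{n} w_k·f(x_k) for every polynomial f of degree at most 2n − 1. -/

import Mathlib

open Polynomial MeasureTheory

/-- **Existence of a Gauss quadrature rule with positive weights.**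
Let `w ≥ 0` be a measurable weight on `ℝ` with all moments finite, positive on a set
of positive Lebesgue measure.  Let `p` be a monic real polynomial of degree `n ≥ 1`
orthogonal to all polynomials of degree `< n` with respect to `w`, with distinct real
roots `x 0 < ⋯ < x (n-1)`.  Then there are strictly positive weights `w' k` with
`∫ f(x) w(x) dx = ∑ k, w' k * f (x k)` for every polynomial `f` of degree `≤ 2n - 1`. -/
theorem gauss_quadrature_exists
    (w : ℝ → ℝ) (hmeas : Measurable w) (hnonneg : ∀ x, 0 ≤ w x)
    (hmom : ∀ k : ℕ, Integrable (fun x : ℝ => |x| ^ k * w x))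
    (hpos : 0 < volume {x : ℝ | 0 < w x})
    (n : ℕ) (hn : 1 ≤ n) (p : Polynomial ℝ) (hmonic : p.Monic) (hdeg : p.natDegree = n)
    (horth : ∀ q : Polynomial ℝ, q.degree < (n : ℕ) →
      ∫ x : ℝ, Polynomial.eval x p * Polynomial.eval x q * w x = 0)
    (x : Fin n → ℝ) (hx : StrictMono x)
    (hroot : ∀ k : Fin n, Polynomial.eval (x k) p = 0)
    (hall : ∀ y : ℝ, Polynomial.eval y p = 0 → ∃ k : Fin n, y = x k) :
    ∃ w' : Fin n → ℝ, (∀ k, 0 < w' k) ∧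
      ∀ f : Polynomial ℝ, f.natDegree ≤ 2 * n - 1 →
        ∫ t : ℝ, Polynomial.eval t f * w t = ∑ k : Fin n, w' k * Polynomial.eval (x k) f := by
  classical
  -- Integrability of any polynomial times the weight
  have hint : ∀ q : Polynomial ℝ, Integrable (fun t : ℝ => Polynomial.eval t q * w t) := by
    intro q
    have hb : Integrable (fun t : ℝ =>
        ∑ i ∈ Finset.range (q.natDegree + 1), |q.coeff i| * (|t| ^ i * w t)) :=
      integrable_finset_sum _ fun i _ => (hmom i).const_mul _
    refine hb.mono' ((q.continuous.measurable.mul hmeas).aestronglyMeasurable) ?_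
    filter_upwards with t
    have h1 : |Polynomial.eval t q| ≤
        ∑ i ∈ Finset.range (q.natDegree + 1), |q.coeff i| * |t| ^ i := by
      conv_lhs => rw [Polynomial.eval_eq_sum_range]
      refine (Finset.abs_sum_le_sum_abs _ _).trans ?_
      refine Finset.sum_le_sum fun i _ => ?_
      rw [abs_mul, abs_pow]
    calc ‖Polynomial.eval t q * w t‖ = |Polynomial.eval t q| * w t := by
          rw [Real.norm_eq_abs, abs_mul, abs_of_nonneg (hnonneg t)]
      _ ≤ (∑ i ∈ Finset.range (q.natDegree + 1), |q.coeff i| * |t| ^ i) * w t :=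
          mul_le_mul_of_nonneg_right h1 (hnonneg t)
      _ = _ := by rw [Finset.sum_mul]; exact Finset.sum_congr rfl fun i _ => by ring
  have hxinj : Set.InjOn x (Finset.univ : Finset (Fin n)) := fun a _ b _ h => hx.injective h
  set L : Fin n → Polynomial ℝ := fun k => Lagrange.basis Finset.univ x k with hL
  have hcard : (Finset.univ : Finset (Fin n)).card = n := Finset.card_fin n
  have hLdeg : ∀ k, (L k).natDegree = n - 1 := fun k => by
    rw [hL, Lagrange.natDegree_basis hxinj (Finset.mem_univ k), hcard]
  have hLself : ∀ k, Polynomial.eval (x k) (L k) = 1 := fun k =>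
    Lagrange.eval_basis_self hxinj (Finset.mem_univ k)
  have hLne : ∀ j k : Fin n, j ≠ k → Polynomial.eval (x k) (L j) = 0 := fun j k h =>
    Lagrange.eval_basis_of_ne h (Finset.mem_univ k)
  set W : Fin n → ℝ := fun k => ∫ t : ℝ, Polynomial.eval t (L k) * w t with hW
  have hpne : p ≠ 0 := hmonic.ne_zero
  have hpdeg : p.degree = (n : ℕ) := by rw [Polynomial.degree_eq_natDegree hpne, hdeg]
  -- the quadrature identity for polynomials of degree < n
  have interp : ∀ r : Polynomial ℝ, r.degree < (n : ℕ) →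
      ∫ t : ℝ, Polynomial.eval t r * w t = ∑ k : Fin n, W k * Polynomial.eval (x k) r := by
    intro r hrd
    have hdlt : r.degree < ((Finset.univ : Finset (Fin n)).card : WithBot ℕ) := by
      rwa [hcard]
    have hre := Lagrange.eq_interpolate (s := (Finset.univ : Finset (Fin n))) (v := x)
      hxinj hdlt
    calc ∫ t : ℝ, Polynomial.eval t r * w t
        = ∫ t : ℝ, ∑ k : Fin n,
            Polynomial.eval (x k) r * (Polynomial.eval t (L k) * w t) := by
          congr 1; funext t
          conv_lhs => rw [hre]
          rw [Lagrange.interpolate_apply, Polynomial.eval_finset_sum, Finset.sum_mul]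
          exact Finset.sum_congr rfl fun k _ => by
            rw [Polynomial.eval_mul, Polynomial.eval_C]; ring
      _ = ∑ k : Fin n, ∫ t : ℝ,
            Polynomial.eval (x k) r * (Polynomial.eval t (L k) * w t) :=
          integral_finset_sum _ (fun k _ => (hint (L k)).const_mul _)
      _ = ∑ k : Fin n, W k * Polynomial.eval (x k) r := by
          refine Finset.sum_congr rfl fun k _ => ?_
          rw [MeasureTheory.integral_const_mul, mul_comm]
  -- the quadrature identity for polynomials of degree ≤ 2n-1
  have key : ∀ f : Polynomial ℝ, f.natDegree ≤ 2 * n - 1 →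
      ∫ t : ℝ, Polynomial.eval t f * w t = ∑ k : Fin n, W k * Polynomial.eval (x k) f := by
    intro f hf
    have hfeq : f = f %ₘ p + p * (f /ₘ p) := (Polynomial.modByMonic_add_div f p).symm
    have hdq : (f /ₘ p).degree < (n : ℕ) := by
      rcases eq_or_ne (f /ₘ p) 0 with h | h
      · rw [h, Polynomial.degree_zero]; exact WithBot.bot_lt_coe n
      · rw [Polynomial.degree_eq_natDegree h, Nat.cast_lt,
          Polynomial.natDegree_divByMonic f hmonic, hdeg]
        omega
    have hrd : (f %ₘ p).degree < (n : ℕ) :=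
      (Polynomial.degree_modByMonic_lt f hmonic).trans_le hpdeg.le
    have hfx : ∀ k : Fin n, Polynomial.eval (x k) f = Polynomial.eval (x k) (f %ₘ p) := by
      intro k
      conv_lhs => rw [hfeq]
      rw [Polynomial.eval_add, Polynomial.eval_mul, hroot k, zero_mul, add_zero]
    have h1 : Integrable (fun t : ℝ =>
        Polynomial.eval t p * Polynomial.eval t (f /ₘ p) * w t) := by
      simpa [Polynomial.eval_mul] using hint (p * (f /ₘ p))
    calc ∫ t : ℝ, Polynomial.eval t f * w t
        = ∫ t : ℝ, (Polynomial.eval t p * Polynomial.eval t (f /ₘ p) * w t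
            + Polynomial.eval t (f %ₘ p) * w t) := by
          congr 1; funext t
          conv_lhs => rw [hfeq]
          rw [Polynomial.eval_add, Polynomial.eval_mul]; ring
      _ = (∫ t : ℝ, Polynomial.eval t p * Polynomial.eval t (f /ₘ p) * w t)
            + ∫ t : ℝ, Polynomial.eval t (f %ₘ p) * w t :=
          integral_add h1 (hint _)
      _ = ∫ t : ℝ, Polynomial.eval t (f %ₘ p) * w t := by
          rw [horth _ hdq, zero_add]
      _ = ∑ k : Fin n, W k * Polynomial.eval (x k) (f %ₘ p) := interp _ hrd
      _ = ∑ k : Fin n, W k * Polynomial.eval (x k) f :=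
          Finset.sum_congr rfl fun k _ => by rw [hfx k]
  -- positivity of the weights
  have hWpos : ∀ k, 0 < W k := by
    intro k
    have hLk2 : ((L k) ^ 2).natDegree ≤ 2 * n - 1 := by
      rw [Polynomial.natDegree_pow, hLdeg k]; omega
    have h2 := key ((L k) ^ 2) hLk2
    have hsum : ∑ j : Fin n, W j * Polynomial.eval (x j) ((L k) ^ 2) = W k := by
      rw [Finset.sum_eq_single k]
      · rw [Polynomial.eval_pow, hLself k]; ring
      · intro j _ hj
        rw [Polynomial.eval_pow, hLne k j (Ne.symm hj)]; ring
      · intro h; exact absurd (Finset.mem_univ k) h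
    rw [hsum] at h2
    rw [← h2]
    have hnn : 0 ≤ fun t : ℝ => Polynomial.eval t ((L k) ^ 2) * w t := fun t => by
      simp only [Polynomial.eval_pow, Pi.zero_apply]
      exact mul_nonneg (sq_nonneg _) (hnonneg t)
    rw [MeasureTheory.integral_pos_iff_support_of_nonneg hnn (hint _)]
    have hLkne : L k ≠ 0 := fun h => by simpa [h] using hLself k
    have hfin : {t : ℝ | Polynomial.eval t (L k) = 0}.Finite :=
      Polynomial.finite_setOf_isRoot hLkne
    refine lt_of_lt_of_le ?_ (measure_mono
      (?_ : {t : ℝ | 0 < w t} \ {t : ℝ | Polynomial.eval t (L k) = 0} ⊆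
        Function.support fun t : ℝ => Polynomial.eval t ((L k) ^ 2) * w t))
    · rwa [measure_diff_null (hfin.measure_zero _)]
    · intro t ht
      simp only [Set.mem_diff, Set.mem_setOf_eq] at ht
      simp only [Function.mem_support, Polynomial.eval_pow]
      exact mul_ne_zero (pow_ne_zero _ ht.2) (ne_of_gt ht.1)
  exact ⟨W, hWpos, key⟩
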